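/- If ρ and σ are (possibly subnormalized) density matrices on a d-dimensional Hilbert space with ‖ρ - σ‖₁ ≤ ε ≤ 1/e, then |S(ρ) - S(σ)| ≤ ε log(d/ε), where S(ρ) = -tr(ρ log ρ) (Fannes' inequality). -/

import Mathlib

open Matrix ComplexOrder

/-- The Schatten 1-norm (trace norm) `‖X‖₁ = tr √(Xᴴ X)` of a complex matrix. -/
noncomputable def traceNorm {m n : Type*} [Fintype m] [Fintype n] [DecidableEq n]
    (X : Matrix m n ℂ) : ℝ :=
  (((Matrix.posSemidef_conjTranspose_mul_self X).1.eigenvectorUnitary : Matrix n n ℂ) *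
    diagonal (((↑) : ℝ → ℂ) ∘ Real.sqrt ∘ (Matrix.posSemidef_conjTranspose_mul_self X).1.eigenvalues) *
    (star (Matrix.posSemidef_conjTranspose_mul_self X).1.eigenvectorUnitary : Matrix n n ℂ)).trace.re

/-- The von Neumann entropy `S(ρ) = -∑ᵢ λᵢ log λᵢ`, where `λᵢ` are the eigenvalues
of the Hermitian matrix `ρ`. -/
noncomputable def vonNeumannEntropy {n : Type*} [Fintype n] [DecidableEq n]
    (ρ : Matrix n n ℂ) (hρ : ρ.IsHermitian) : ℝ :=
  -∑ i, hρ.eigenvalues i * Real.log (hρ.eigenvalues i)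

namespace FannesAux

/-! ### Functional calculus for Hermitian matrices -/

section MatFun
variable {n : Type*} [Fintype n] [DecidableEq n] {A : Matrix n n ℂ}

/-- Functional calculus of a Hermitian matrix. -/
noncomputable def matFun (hA : A.IsHermitian) (f : ℝ → ℝ) : Matrix n n ℂ :=
  (hA.eigenvectorUnitary : Matrix n n ℂ) * diagonal (Complex.ofReal ∘ f ∘ hA.eigenvalues) *
    star (hA.eigenvectorUnitary : Matrix n n ℂ)

lemma matFun_id (hA : A.IsHermitian) : matFun hA id = A := by
  rw [matFun]; exact (hA.spectral_theorem).symm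

lemma matFun_sub (hA : A.IsHermitian) (f g : ℝ → ℝ) :
    matFun hA f - matFun hA g = matFun hA (f - g) := by
  simp only [matFun, ← sub_mul, ← mul_sub, diagonal_sub]
  congr 2
  funext i k
  simp [diagonal_apply, Function.comp]

lemma matFun_mul (hA : A.IsHermitian) (f g : ℝ → ℝ) :
    matFun hA f * matFun hA g = matFun hA (f * g) := by
  simp only [matFun]
  have h1 : ∀ (U D1 D2 V : Matrix n n ℂ), U*D1*V*(U*D2*V) = U*(D1*((V*U)*D2))*V := by
    intros; simp only [mul_assoc]
  rw [h1, Unitary.coe_star_mul_self, one_mul, diagonal_mul_diagonal]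
  congr 2
  funext i k
  simp [diagonal_apply, Function.comp]

lemma matFun_posSemidef (hA : A.IsHermitian) {f : ℝ → ℝ} (hf : ∀ x, 0 ≤ f x) :
    (matFun hA f).PosSemidef := by
  have : (diagonal (Complex.ofReal ∘ f ∘ hA.eigenvalues)).PosSemidef := by
    rw [posSemidef_diagonal_iff]
    intro i
    simpa using Complex.zero_le_real.2 (hf _)
  have h2 := this.mul_mul_conjTranspose_same (hA.eigenvectorUnitary : Matrix n n ℂ)
  rwa [← star_eq_conjTranspose] at h2

lemma matFun_trace (hA : A.IsHermitian) (f : ℝ → ℝ) :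
    (matFun hA f).trace = ∑ i, (f (hA.eigenvalues i) : ℂ) := by
  rw [matFun, trace_mul_cycle, Unitary.coe_star_mul_self, one_mul, trace_diagonal]
  simp

lemma matFun_isHermitian (hA : A.IsHermitian) (f : ℝ → ℝ) : (matFun hA f).IsHermitian := by
  have hD : (diagonal (Complex.ofReal ∘ f ∘ hA.eigenvalues))ᴴ
      = diagonal (Complex.ofReal ∘ f ∘ hA.eigenvalues) := by
    rw [diagonal_conjTranspose]
    ext j k
    simp [diagonal_apply, Pi.star_apply, Complex.conj_ofReal]
  unfold matFun
  rw [Matrix.IsHermitian, star_eq_conjTranspose, conjTranspose_mul, conjTranspose_mul, hD,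
    ← star_eq_conjTranspose, ← star_eq_conjTranspose, star_star, mul_assoc]

lemma sum_eigenvalues_eq_trace_re (hA : A.IsHermitian) :
    ∑ i, hA.eigenvalues i = A.trace.re := by
  have h : A.trace = ∑ i, (hA.eigenvalues i : ℂ) := by
    conv_lhs => rw [← matFun_id hA]
    simpa using matFun_trace hA id
  rw [h, Complex.re_sum]
  simp

open scoped MatrixOrder in
lemma matFun_abs_eq_sqrt (hA : A.IsHermitian) :
    matFun hA (fun x => |x|) = matFun (posSemidef_conjTranspose_mul_self A).1 Real.sqrt := by
  have h1 : matFun (posSemidef_conjTranspose_mul_self A).1 Real.sqrt = CFC.sqrt (Aᴴ * A) := by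
    rw [CFC.sqrt_eq_real_sqrt _ (posSemidef_conjTranspose_mul_self A).nonneg,
      cfcₙ_eq_cfc (hf0 := Real.sqrt_zero), (posSemidef_conjTranspose_mul_self A).1.cfc_eq]
    rfl
  rw [h1, eq_comm]
  apply CFC.sqrt_unique _ (matFun_posSemidef hA (fun x => abs_nonneg x)).nonneg
  rw [matFun_mul, hA.eq]
  have hfg : ((fun x : ℝ => |x|) * fun x : ℝ => |x|) = ((id : ℝ → ℝ) * id) := by
    funext x
    simp only [Pi.mul_apply, id_eq]
    exact abs_mul_abs_self x
  rw [hfg, ← matFun_mul, matFun_id]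

end MatFun

/-! ### Quadratic forms and eigenvector expansions -/

section Euclidean
variable {d : ℕ} {A B : Matrix (Fin d) (Fin d) ℂ}

noncomputable def coeff (hA : A.IsHermitian) (x : EuclideanSpace ℂ (Fin d)) (j : Fin d) : ℂ :=
  inner (𝕜 := ℂ) (hA.eigenvectorBasis j) x

lemma repr_eq_coeff (hA : A.IsHermitian) (x : EuclideanSpace ℂ (Fin d)) (j : Fin d) :
    hA.eigenvectorBasis.repr x j = coeff hA x j :=
  hA.eigenvectorBasis.repr_apply_apply x j

lemma toEuclideanLin_eigenvectorBasis (hA : A.IsHermitian) (j : Fin d) :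
    Matrix.toEuclideanLin A (hA.eigenvectorBasis j)
      = (hA.eigenvalues j : ℂ) • hA.eigenvectorBasis j := by
  rw [toEuclideanLin_apply, hA.mulVec_eigenvectorBasis, WithLp.toLp_smul,
    WithLp.toLp_ofLp, RCLike.real_smul_eq_coe_smul (K := ℂ)]
  rfl

lemma coeff_toEuclideanLin (hA : A.IsHermitian) (x : EuclideanSpace ℂ (Fin d)) (j : Fin d) :
    coeff hA (Matrix.toEuclideanLin A x) j = (hA.eigenvalues j : ℂ) * coeff hA x j := by
  unfold coeff
  rw [← (isHermitian_iff_isSymmetric.1 hA) (hA.eigenvectorBasis j) x,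
    toEuclideanLin_eigenvectorBasis, inner_smul_left, Complex.conj_ofReal]

lemma inner_expand (hA : A.IsHermitian) (x y : EuclideanSpace ℂ (Fin d)) :
    inner (𝕜 := ℂ) x y = ∑ j, (starRingEnd ℂ) (coeff hA x j) * coeff hA y j := by
  rw [← (hA.eigenvectorBasis.repr.inner_map_map x y)]
  rw [PiLp.inner_apply]
  simp only [RCLike.inner_apply, repr_eq_coeff]
  exact Finset.sum_congr rfl (fun j _ => mul_comm _ _)

lemma quad_expand (hA : A.IsHermitian) (x : EuclideanSpace ℂ (Fin d)) :
    (inner (𝕜 := ℂ) x (Matrix.toEuclideanLin A x)).re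
      = ∑ j, hA.eigenvalues j * Complex.normSq (coeff hA x j) := by
  rw [inner_expand hA, Complex.re_sum]
  congr 1; funext j
  rw [coeff_toEuclideanLin]
  have h1 : (starRingEnd ℂ) (coeff hA x j) * ((hA.eigenvalues j : ℂ) * coeff hA x j)
      = (hA.eigenvalues j : ℂ) * ((starRingEnd ℂ) (coeff hA x j) * coeff hA x j) := by ring
  rw [h1, ← Complex.normSq_eq_conj_mul_self, ← Complex.ofReal_mul, Complex.ofReal_re]

lemma normsq_expand (hA : A.IsHermitian) (x : EuclideanSpace ℂ (Fin d)) :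
    (inner (𝕜 := ℂ) x x).re = ∑ j, Complex.normSq (coeff hA x j) := by
  rw [inner_expand hA, Complex.re_sum]
  congr 1; funext j
  rw [← Complex.normSq_eq_conj_mul_self, Complex.ofReal_re]

lemma inner_toEuclideanLin_eq_dotProduct (M : Matrix (Fin d) (Fin d) ℂ)
    (x : EuclideanSpace ℂ (Fin d)) :
    inner (𝕜 := ℂ) x (Matrix.toEuclideanLin M x)
      = dotProduct (star ((WithLp.equiv 2 (Fin d → ℂ)) x)) (M *ᵥ (WithLp.equiv 2 (Fin d → ℂ)) x) := by
  rw [EuclideanSpace.inner_eq_star_dotProduct, toEuclideanLin_apply, WithLp.ofLp_toLp, dotProduct_comm]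
  rfl

lemma quad_mono {A B : Matrix (Fin d) (Fin d) ℂ} (hAB : (B - A).PosSemidef)
    (x : EuclideanSpace ℂ (Fin d)) :
    (inner (𝕜 := ℂ) x (Matrix.toEuclideanLin A x)).re
      ≤ (inner (𝕜 := ℂ) x (Matrix.toEuclideanLin B x)).re := by
  have h := hAB.dotProduct_mulVec_nonneg ((WithLp.equiv 2 (Fin d → ℂ)) x)
  rw [Complex.nonneg_iff] at h
  have h2 : (dotProduct (star ((WithLp.equiv 2 (Fin d → ℂ)) x)) ((B - A) *ᵥ (WithLp.equiv 2 (Fin d → ℂ)) x)).re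
      = (inner (𝕜 := ℂ) x (Matrix.toEuclideanLin B x)).re
        - (inner (𝕜 := ℂ) x (Matrix.toEuclideanLin A x)).re := by
    rw [inner_toEuclideanLin_eq_dotProduct, inner_toEuclideanLin_eq_dotProduct]
    rw [Matrix.sub_mulVec, dotProduct_sub, Complex.sub_re]
  linarith [h.1, h2.le]

/-! ### Sorted eigenvalues and Weyl's monotonicity principle -/

noncomputable def sortEig (hA : A.IsHermitian) : Fin d → ℝ :=
  hA.eigenvalues ∘ Tuple.sort hA.eigenvalues

lemma sortEig_mono (hA : A.IsHermitian) : Monotone (sortEig hA) :=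
  Tuple.monotone_sort _

lemma sum_comp_sortEig (hA : A.IsHermitian) (g : ℝ → ℝ) :
    ∑ i, g (sortEig hA i) = ∑ i, g (hA.eigenvalues i) :=
  Equiv.sum_comp (Tuple.sort hA.eigenvalues) (fun j => g (hA.eigenvalues j))

/-- Weyl's monotonicity principle. -/
lemma weyl (hA : A.IsHermitian) (hB : B.IsHermitian) (hAB : (B - A).PosSemidef) (i : Fin d) :
    sortEig hA i ≤ sortEig hB i := by
  classical
  set pA := Tuple.sort hA.eigenvalues with hpA
  set pB := Tuple.sort hB.eigenvalues with hpB
  -- the constraint map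
  set L : EuclideanSpace ℂ (Fin d) →ₗ[ℂ]
      ({k : Fin d // k < i} → ℂ) × ({k : Fin d // i < k} → ℂ) :=
    LinearMap.prod
      (LinearMap.pi fun k => ((innerSL ℂ (hA.eigenvectorBasis (pA k.1))) : _ →L[ℂ] ℂ).toLinearMap)
      (LinearMap.pi fun k => ((innerSL ℂ (hB.eigenvectorBasis (pB k.1))) : _ →L[ℂ] ℂ).toLinearMap)
    with hL
  have hcard1 : Fintype.card {k : Fin d // k < i} = i := by
    rw [Fintype.card_subtype]
    rw [show Finset.filter (fun x => x < i) Finset.univ = Finset.Iio i by ext k; simp]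
    exact Fin.card_Iio i
  have hcard2 : Fintype.card {k : Fin d // i < k} = d - 1 - i := by
    rw [Fintype.card_subtype]
    rw [show Finset.filter (fun x => i < x) Finset.univ = Finset.Ioi i by ext k; simp]
    exact Fin.card_Ioi i
  have hker : LinearMap.ker L ≠ ⊥ := by
    apply LinearMap.ker_ne_bot_of_finrank_lt (K := ℂ)
    rw [Module.finrank_prod, Module.finrank_pi, Module.finrank_pi, finrank_euclideanSpace,
      Fintype.card_fin, hcard1, hcard2]
    have := i.isLt
    omega
  obtain ⟨x, hxL, hx0⟩ := (Submodule.ne_bot_iff _).1 hker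
  rw [LinearMap.mem_ker] at hxL
  have hxA : ∀ k : Fin d, k < i → coeff hA x (pA k) = 0 := by
    intro k hk
    have := congrArg (fun z => z.1 ⟨k, hk⟩) hxL
    simpa [hL, coeff, LinearMap.pi_apply] using this
  have hxB : ∀ k : Fin d, i < k → coeff hB x (pB k) = 0 := by
    intro k hk
    have := congrArg (fun z => z.2 ⟨k, hk⟩) hxL
    simpa [hL, coeff, LinearMap.pi_apply] using this
  -- lower bound for the A-form
  have hlow : sortEig hA i * (inner (𝕜 := ℂ) x x).re
      ≤ (inner (𝕜 := ℂ) x (Matrix.toEuclideanLin A x)).re := by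
    rw [quad_expand hA x, normsq_expand hA x, Finset.mul_sum]
    apply Finset.sum_le_sum
    intro j _
    rcases eq_or_ne (coeff hA x j) 0 with hc | hc
    · simp [hc]
    · have hk : i ≤ pA.symm j := by
        by_contra hlt
        push_neg at hlt
        exact hc (by simpa using hxA (pA.symm j) hlt)
      have : sortEig hA i ≤ hA.eigenvalues j := by
        have := sortEig_mono hA hk
        simpa [sortEig, hpA] using this
      exact mul_le_mul_of_nonneg_right this (Complex.normSq_nonneg _)
  -- upper bound for the B-form
  have hhigh : (inner (𝕜 := ℂ) x (Matrix.toEuclideanLin B x)).re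
      ≤ sortEig hB i * (inner (𝕜 := ℂ) x x).re := by
    rw [quad_expand hB x, normsq_expand hB x, Finset.mul_sum]
    apply Finset.sum_le_sum
    intro j _
    rcases eq_or_ne (coeff hB x j) 0 with hc | hc
    · simp [hc]
    · have hk : pB.symm j ≤ i := by
        by_contra hlt
        push_neg at hlt
        exact hc (by simpa using hxB (pB.symm j) hlt)
      have : hB.eigenvalues j ≤ sortEig hB i := by
        have := sortEig_mono hB hk
        simpa [sortEig, hpB] using this
      exact mul_le_mul_of_nonneg_right this (Complex.normSq_nonneg _)
  have hpos : 0 < (inner (𝕜 := ℂ) x x).re := by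
    have h1 : (inner (𝕜 := ℂ) x x).re = ‖x‖ * ‖x‖ := by
      have := @inner_self_eq_norm_mul_norm ℂ _ _ _ _ x
      simpa using this
    rw [h1]
    have : 0 < ‖x‖ := norm_pos_iff.2 hx0
    positivity
  have := (hlow.trans (quad_mono hAB x)).trans hhigh
  exact le_of_mul_le_mul_right this hpos

end Euclidean

/-! ### Scalar lemmas -/

lemma max_sub_max_neg (x : ℝ) : max x 0 - max (-x) 0 = x := by
  rcases le_total 0 x with h | h
  · rw [max_eq_left h, max_eq_right (neg_nonpos.2 h)]; ring
  · rw [max_eq_right h, max_eq_left (neg_nonneg.2 h)]; ring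

lemma max_add_max_neg (x : ℝ) : max x 0 + max (-x) 0 = |x| := by
  rcases le_total 0 x with h | h
  · rw [max_eq_left h, max_eq_right (neg_nonpos.2 h), abs_of_nonneg h]; ring
  · rw [max_eq_right h, max_eq_left (neg_nonneg.2 h), abs_of_nonpos h]; ring

/-- Key scalar estimate: `|η(x+t) - η(x)| ≤ η(t)` for `t ≤ 1/e`, where `η(u) = -u log u`. -/
lemma eta_diff_le (x t : ℝ) (hx : 0 ≤ x) (ht : 0 ≤ t) (hxt : x + t ≤ 1)
    (hte : t ≤ Real.exp (-1)) :
    |(x + t) * Real.log (x + t) - x * Real.log x| ≤ -(t * Real.log t) := by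
  rcases ht.eq_or_lt with ht0 | ht0
  · simp [← ht0]
  set a := Real.log (x + t) with ha
  set b := Real.log x with hb
  set c := Real.log t with hc
  have hxtpos : 0 < x + t := by linarith
  have key1 : x * (a - b) ≤ t := by
    rcases hx.eq_or_lt with hx0 | hx0
    · simp [← hx0]; exact ht
    · have h1 : a - b = Real.log ((x + t) / x) := by
        rw [ha, hb, Real.log_div (by positivity) (by positivity)]
      have h2 : Real.log ((x + t) / x) ≤ (x + t) / x - 1 :=
        Real.log_le_sub_one_of_pos (by positivity)
      have h3 : (x + t) / x - 1 = t / x := by field_simp; ring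
      have h4 : x * (a - b) ≤ x * (t / x) := by
        rw [h1]
        exact mul_le_mul_of_nonneg_left (h2.trans_eq h3) hx
      rwa [mul_div_cancel₀ t (ne_of_gt hx0)] at h4
  have key2 : 0 ≤ x * (a - b) := by
    rcases hx.eq_or_lt with hx0 | hx0
    · simp [← hx0]
    · have : b ≤ a := Real.log_le_log hx0 (by linarith)
      have : 0 ≤ a - b := by linarith
      positivity
  have hA : a ≤ 0 := Real.log_nonpos (le_of_lt hxtpos) hxt
  have hC : c ≤ -1 := by
    have := Real.log_le_log ht0 hte
    rwa [Real.log_exp] at this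
  have hCA : c ≤ a := Real.log_le_log ht0 (by linarith)
  have hD : (x + t) * a - x * b = x * (a - b) + t * a := by ring
  rw [abs_le]
  constructor
  · have h1 : t * c ≤ t * a := mul_le_mul_of_nonneg_left hCA ht
    rw [neg_neg, hD]
    linarith
  · have h1 : t * (1 + a + c) ≤ 0 :=
      mul_nonpos_of_nonneg_of_nonpos ht (by linarith)
    rw [hD]
    nlinarith

/-- Entropy-concentration: `∑ η(δᵢ) ≤ η(Δ) + Δ log d` for nonnegative `δ` with sum `Δ`. -/
lemma sum_eta_le {d : ℕ} (hd : 1 ≤ d) (δ : Fin d → ℝ) (hδ : ∀ i, 0 ≤ δ i) :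
    ∑ i, -(δ i * Real.log (δ i))
      ≤ (∑ i, δ i) * Real.log d - (∑ i, δ i) * Real.log (∑ i, δ i) := by
  set Δ := ∑ i, δ i with hΔ
  have hΔ0 : 0 ≤ Δ := Finset.sum_nonneg fun i _ => hδ i
  have hdR : (1 : ℝ) ≤ (d : ℝ) := by exact_mod_cast hd
  have hdpos : (0 : ℝ) < d := by linarith
  rcases hΔ0.eq_or_lt with h0 | hΔpos
  · have hz : ∀ i, δ i = 0 := by
      intro i
      have h := (Finset.sum_eq_zero_iff_of_nonneg
        (fun j (_ : j ∈ Finset.univ) => hδ j)).1 h0.symm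
      exact h i (Finset.mem_univ i)
    have hc : ∀ i ∈ Finset.univ, -(δ i * Real.log (δ i)) = 0 := by
      intro i _
      rw [hz i]
      simp
    rw [Finset.sum_congr rfl hc, ← h0]
    simp
  · have hterm : ∀ i ∈ Finset.univ, -(δ i * Real.log (δ i))
        ≤ δ i * Real.log d - δ i * Real.log Δ + (Δ / d - δ i) := by
      intro i _
      rcases (hδ i).eq_or_lt with h0i | hpos
      · rw [← h0i]
        have : 0 ≤ Δ / d := by positivity
        simpa using this
      · have h1 : Real.log (Δ / (d * δ i)) ≤ Δ / (d * δ i) - 1 :=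
          Real.log_le_sub_one_of_pos (by positivity)
        have h2 : Real.log (Δ / (d * δ i))
            = Real.log Δ - Real.log d - Real.log (δ i) := by
          rw [Real.log_div (ne_of_gt hΔpos) (by positivity),
            Real.log_mul (ne_of_gt hdpos) (ne_of_gt hpos)]
          ring
        have h3 : δ i * (Real.log Δ - Real.log d - Real.log (δ i))
            ≤ δ i * (Δ / (d * δ i) - 1) := by
          rw [← h2]
          exact mul_le_mul_of_nonneg_left h1 (le_of_lt hpos)
        have h4 : δ i * (Δ / (d * δ i) - 1) = Δ / d - δ i := by
          field_simp
        rw [h4] at h3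
        nlinarith [h3]
    have h5 := Finset.sum_le_sum hterm
    have h6 : ∑ i, (δ i * Real.log d - δ i * Real.log Δ + (Δ / d - δ i))
        = Δ * Real.log d - Δ * Real.log Δ := by
      rw [Finset.sum_add_distrib, Finset.sum_sub_distrib, Finset.sum_sub_distrib,
        ← Finset.sum_mul, ← Finset.sum_mul, Finset.sum_const, Finset.card_univ,
        Fintype.card_fin, ← hΔ]
      field_simp
      rw [nsmul_eq_mul, mul_div_cancel₀ _ (ne_of_gt hdpos)]
      ring
    rw [h6] at h5
    exact h5

/-- Monotonicity of `t ↦ t log d - t log t` on `[0, 1/e]`. -/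
lemma eta_log_mono {D ε dR : ℝ} (hD : 0 ≤ D) (hDε : D ≤ ε) (hε : 0 < ε)
    (hεe : ε ≤ Real.exp (-1)) (hdR : 1 ≤ dR) :
    D * Real.log dR - D * Real.log D ≤ ε * Real.log dR - ε * Real.log ε := by
  have hL : 0 ≤ Real.log dR := Real.log_nonneg hdR
  have hA : Real.log ε ≤ -1 := by
    have := Real.log_le_log hε hεe
    rwa [Real.log_exp] at this
  rcases hD.eq_or_lt with h0 | hDpos
  · rw [← h0]
    simp only [zero_mul, sub_zero, zero_sub]
    nlinarith
  · have h1 : Real.log ε - Real.log D ≤ ε / D - 1 := by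
      rw [← Real.log_div (ne_of_gt hε) (ne_of_gt hDpos)]
      exact Real.log_le_sub_one_of_pos (by positivity)
    have h2 : D * (Real.log ε - Real.log D) ≤ D * (ε / D - 1) :=
      mul_le_mul_of_nonneg_left h1 (le_of_lt hDpos)
    have h3 : D * (ε / D - 1) = ε - D := by field_simp
    rw [h3] at h2
    nlinarith [mul_nonneg (sub_nonneg.2 hDε) hL,
      mul_nonneg (sub_nonneg.2 hDε) (by linarith : (0:ℝ) ≤ -Real.log ε - 1)]

end FannesAux

/-- Fannes' inequality: if `ρ, σ` are (possibly subnormalized) density matrices on a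
`d`-dimensional Hilbert space with `‖ρ - σ‖₁ ≤ ε ≤ 1/e`, then
`|S(ρ) - S(σ)| ≤ ε log (d/ε)`. -/
theorem fannes_inequality {d : ℕ} (ρ σ : Matrix (Fin d) (Fin d) ℂ)
    (hρ : ρ.PosSemidef) (hσ : σ.PosSemidef)
    (hρt : ρ.trace.re ≤ 1) (hσt : σ.trace.re ≤ 1)
    (ε : ℝ) (hε : 0 < ε) (hεe : ε ≤ 1 / Real.exp 1)
    (h : traceNorm (ρ - σ) ≤ ε) :
    |vonNeumannEntropy ρ hρ.1 - vonNeumannEntropy σ hσ.1| ≤ ε * Real.log (d / ε) := by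
  classical
  have hεe' : ε ≤ Real.exp (-1) := by
    rw [Real.exp_neg]
    rwa [one_div] at hεe
  rcases Nat.eq_zero_or_pos d with hd0 | hd
  · subst hd0
    have h1 : vonNeumannEntropy ρ hρ.1 = 0 := by simp [vonNeumannEntropy]
    have h2 : vonNeumannEntropy σ hσ.1 = 0 := by simp [vonNeumannEntropy]
    rw [h1, h2]
    simp
  have hd1R : (1 : ℝ) ≤ (d : ℝ) := by exact_mod_cast hd
  set T := ρ - σ with hTdef
  have hT : T.IsHermitian := hρ.1.sub hσ.1
  set Q := FannesAux.matFun hT (fun x => max x 0) with hQdef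
  set R := FannesAux.matFun hT (fun x => max (-x) 0) with hRdef
  have hQps : Q.PosSemidef := FannesAux.matFun_posSemidef hT (fun x => le_max_right x 0)
  have hRps : R.PosSemidef := FannesAux.matFun_posSemidef hT (fun x => le_max_right (-x) 0)
  have hQR : Q - R = ρ - σ := by
    rw [hQdef, hRdef, FannesAux.matFun_sub]
    have hfg : ((fun x : ℝ => max x 0) - fun x : ℝ => max (-x) 0) = id := by
      funext x
      simp only [Pi.sub_apply, id_eq]
      exact FannesAux.max_sub_max_neg x
    rw [hfg, FannesAux.matFun_id]
  -- trace-norm is the sum of absolute values of eigenvalues of T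
  have habs : FannesAux.matFun hT (fun x => |x|)
      = FannesAux.matFun (posSemidef_conjTranspose_mul_self T).1 Real.sqrt :=
    FannesAux.matFun_abs_eq_sqrt hT
  have htn : traceNorm T = ∑ j, |hT.eigenvalues j| := by
    rw [show traceNorm T
        = (FannesAux.matFun (posSemidef_conjTranspose_mul_self T).1 Real.sqrt).trace.re from rfl,
      ← habs, FannesAux.matFun_trace, Complex.re_sum]
    simp
  have hQtr : Q.trace.re = ∑ j, max (hT.eigenvalues j) 0 := by
    rw [hQdef, FannesAux.matFun_trace, Complex.re_sum]
    simp
  have hRtr : R.trace.re = ∑ j, max (-hT.eigenvalues j) 0 := by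
    rw [hRdef, FannesAux.matFun_trace, Complex.re_sum]
    simp
  have hQRtr : Q.trace.re + R.trace.re ≤ ε := by
    rw [hQtr, hRtr, ← Finset.sum_add_distrib]
    have : ∑ j, (max (hT.eigenvalues j) 0 + max (-hT.eigenvalues j) 0)
        = ∑ j, |hT.eigenvalues j| := by
      congr 1
      funext j
      exact FannesAux.max_add_max_neg _
    rw [this, ← htn]
    exact h
  set M := σ + Q with hMdef
  have hM : M.IsHermitian := hσ.1.add hQps.1
  have hReq : R = Q - (ρ - σ) := by rw [← hQR]; abel
  have hMρ : (M - ρ).PosSemidef := by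
    have hmr : M - ρ = R := by rw [hMdef, hReq]; abel
    rw [hmr]; exact hRps
  have hMσ : (M - σ).PosSemidef := by
    have hms : M - σ = Q := by rw [hMdef]; abel
    rw [hms]; exact hQps
  set r := FannesAux.sortEig hρ.1 with hrdef
  set s := FannesAux.sortEig hσ.1 with hsdef
  set t := FannesAux.sortEig hM with htdef
  have hrt : ∀ i, r i ≤ t i := fun i => FannesAux.weyl hρ.1 hM hMρ i
  have hst : ∀ i, s i ≤ t i := fun i => FannesAux.weyl hσ.1 hM hMσ i
  have hsum_r : ∑ i, r i = ρ.trace.re :=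
    (FannesAux.sum_comp_sortEig hρ.1 (fun y => y)).trans
      (FannesAux.sum_eigenvalues_eq_trace_re hρ.1)
  have hsum_s : ∑ i, s i = σ.trace.re :=
    (FannesAux.sum_comp_sortEig hσ.1 (fun y => y)).trans
      (FannesAux.sum_eigenvalues_eq_trace_re hσ.1)
  have hsum_t : ∑ i, t i = M.trace.re :=
    (FannesAux.sum_comp_sortEig hM (fun y => y)).trans
      (FannesAux.sum_eigenvalues_eq_trace_re hM)
  have hMtr1 : M.trace.re = σ.trace.re + Q.trace.re := by
    rw [hMdef, Matrix.trace_add, Complex.add_re]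
  have hMtr2 : M.trace.re = ρ.trace.re + R.trace.re := by
    have hmr : M = ρ + R := by rw [hMdef, hReq]; abel
    rw [hmr, Matrix.trace_add, Complex.add_re]
  set Δ := ∑ i, |r i - s i| with hΔdef
  have hΔnn : 0 ≤ Δ := Finset.sum_nonneg fun i _ => abs_nonneg _
  have hΔ_le : Δ ≤ ε := by
    have hstep : ∀ i ∈ Finset.univ, |r i - s i| ≤ (t i - r i) + (t i - s i) := by
      intro i _
      rw [abs_le]
      constructor
      · linarith [hrt i, hst i]
      · linarith [hrt i, hst i]
    calc Δ ≤ ∑ i, ((t i - r i) + (t i - s i)) := Finset.sum_le_sum hstep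
      _ = Q.trace.re + R.trace.re := by
          rw [Finset.sum_add_distrib, Finset.sum_sub_distrib, Finset.sum_sub_distrib,
            hsum_r, hsum_s, hsum_t]
          linarith [hMtr1, hMtr2]
      _ ≤ ε := hQRtr
  -- eigenvalue range
  have hr0 : ∀ i, 0 ≤ r i := fun i => hρ.eigenvalues_nonneg _
  have hs0 : ∀ i, 0 ≤ s i := fun i => hσ.eigenvalues_nonneg _
  have hr1 : ∀ i, r i ≤ 1 := by
    intro i
    have h1 : r i ≤ ∑ j, r j := Finset.single_le_sum (fun j _ => hr0 j) (Finset.mem_univ i)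
    rw [hsum_r] at h1
    linarith
  have hs1 : ∀ i, s i ≤ 1 := by
    intro i
    have h1 : s i ≤ ∑ j, s j := Finset.single_le_sum (fun j _ => hs0 j) (Finset.mem_univ i)
    rw [hsum_s] at h1
    linarith
  -- entropies via sorted eigenvalues
  have hSρ : vonNeumannEntropy ρ hρ.1 = -∑ i, r i * Real.log (r i) := by
    rw [vonNeumannEntropy]
    congr 1
    exact (FannesAux.sum_comp_sortEig hρ.1 (fun y => y * Real.log y)).symm
  have hSσ : vonNeumannEntropy σ hσ.1 = -∑ i, s i * Real.log (s i) := by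
    rw [vonNeumannEntropy]
    congr 1
    exact (FannesAux.sum_comp_sortEig hσ.1 (fun y => y * Real.log y)).symm
  rw [hSρ, hSσ]
  have hrw : (-∑ i, r i * Real.log (r i)) - (-∑ i, s i * Real.log (s i))
      = ∑ i, (s i * Real.log (s i) - r i * Real.log (r i)) := by
    rw [Finset.sum_sub_distrib]
    ring
  rw [hrw]
  have hper : ∀ i ∈ Finset.univ,
      |s i * Real.log (s i) - r i * Real.log (r i)|
        ≤ -(|r i - s i| * Real.log |r i - s i|) := by
    intro i _
    have hδi : |r i - s i| ≤ Real.exp (-1) := by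
      have h1 : |r i - s i| ≤ Δ :=
        Finset.single_le_sum (fun j (_ : j ∈ Finset.univ) => abs_nonneg (r j - s j))
          (Finset.mem_univ i)
      linarith
    rcases le_total (r i) (s i) with hc | hc
    · have habs' : |r i - s i| = s i - r i := by
        rw [abs_sub_comm, abs_of_nonneg (by linarith)]
      have hkey := FannesAux.eta_diff_le (r i) (s i - r i) (hr0 i) (by linarith)
        (by rw [show r i + (s i - r i) = s i by ring]; exact hs1 i)
        (by rw [← habs']; exact hδi)
      rw [show r i + (s i - r i) = s i by ring] at hkey
      rw [habs']
      exact hkey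
    · have habs' : |r i - s i| = r i - s i := abs_of_nonneg (by linarith)
      have hkey := FannesAux.eta_diff_le (s i) (r i - s i) (hs0 i) (by linarith)
        (by rw [show s i + (r i - s i) = r i by ring]; exact hr1 i)
        (by rw [← habs']; exact hδi)
      rw [show s i + (r i - s i) = r i by ring] at hkey
      rw [habs', abs_sub_comm]
      exact hkey
  calc |∑ i, (s i * Real.log (s i) - r i * Real.log (r i))|
      ≤ ∑ i, |s i * Real.log (s i) - r i * Real.log (r i)| :=
        Finset.abs_sum_le_sum_abs _ _
    _ ≤ ∑ i, -(|r i - s i| * Real.log |r i - s i|) := Finset.sum_le_sum hper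
    _ ≤ Δ * Real.log d - Δ * Real.log Δ :=
        FannesAux.sum_eta_le hd (fun i => |r i - s i|) (fun i => abs_nonneg _)
    _ ≤ ε * Real.log d - ε * Real.log ε :=
        FannesAux.eta_log_mono hΔnn hΔ_le hε hεe' hd1R
    _ = ε * Real.log (d / ε) := by
        rw [Real.log_div (by linarith : (d:ℝ) ≠ 0) (ne_of_gt hε)]
        ring
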